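/- In the group G = F_2^{n-1} ⋊_φ D_{2n} with ρ_0 = (0,h_0), ρ_1 = (0,h_1), ρ_2 = ((0,...,0,1)^T, h_0), the intersection of the subgroups ⟨ρ_0, ρ_1⟩ and ⟨ρ_1, ρ_2⟩ equals ⟨ρ_1⟩. -/

import Mathlib

open Matrix DihedralGroup

/-- The matrix `U` of Lemma 3: (0-indexed) row `i` has a 1 at column `n-3-i` for
`i ≤ n-3`, and the last row is all ones. -/
def Umat (n : ℕ) : Matrix (Fin (n-1)) (Fin (n-1)) (ZMod 2) :=
  Matrix.of fun i j =>
    if (i : ℕ) = n - 2 then 1 else if (i : ℕ) + (j : ℕ) = n - 3 then 1 else 0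

/-- The anti-diagonal permutation matrix `V` of Lemma 3. -/
def Vmat (n : ℕ) : Matrix (Fin (n-1)) (Fin (n-1)) (ZMod 2) :=
  Matrix.of fun i j => if (i : ℕ) + (j : ℕ) = n - 2 then 1 else 0

/-- u = (0,…,0,1)ᵀ ∈ F₂^{n-1}. -/
def uVec (n : ℕ) : Fin (n-1) → ZMod 2 := fun i => if (i : ℕ) = n - 2 then 1 else 0

/-- v = Vu = (1,0,…,0)ᵀ ∈ F₂^{n-1}. -/
def vVec (n : ℕ) : Fin (n-1) → ZMod 2 := fun i => if (i : ℕ) = 0 then 1 else 0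

/-- The action of `D_{2n}` on `F₂^{n-1}` (written multiplicatively) induced by a
representation `φ : D_{2n} → Aut(F₂^{n-1})`. -/
def dihAct (n : ℕ) (φ : DihedralGroup n →* Multiplicative (AddAut (Fin (n-1) → ZMod 2))) :
    DihedralGroup n →* MulAut (Multiplicative (Fin (n-1) → ZMod 2)) where
  toFun x := AddEquiv.toMultiplicative (Multiplicative.toAdd (φ x))
  map_one' := by ext w; simp
  map_mul' x y := by ext w; simp [AddAut.coe_add]

/-- The semidirect product `G = F₂^{n-1} ⋊_φ D_{2n}`. -/
abbrev Gsd (n : ℕ) (φ : DihedralGroup n →* Multiplicative (AddAut (Fin (n-1) → ZMod 2))) :=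
  Multiplicative (Fin (n-1) → ZMod 2) ⋊[dihAct n φ] DihedralGroup n

/-- `ρ₀ = (0, h₀)`, where `h₀ = sr 0`. -/
def rho0 (n : ℕ) (φ : DihedralGroup n →* Multiplicative (AddAut (Fin (n-1) → ZMod 2))) : Gsd n φ :=
  ⟨Multiplicative.ofAdd 0, sr 0⟩

/-- `ρ₁ = (0, h₁)`, where `h₁ = sr 1`. -/
def rho1 (n : ℕ) (φ : DihedralGroup n →* Multiplicative (AddAut (Fin (n-1) → ZMod 2))) : Gsd n φ :=
  ⟨Multiplicative.ofAdd 0, sr 1⟩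

/-- `ρ₂ = (u, h₀)`, where `u = (0,…,0,1)ᵀ`. -/
def rho2 (n : ℕ) (φ : DihedralGroup n →* Multiplicative (AddAut (Fin (n-1) → ZMod 2))) : Gsd n φ :=
  ⟨Multiplicative.ofAdd (uVec n), sr 0⟩

/-- indicator vector -/
def indV (n c : ℕ) : Fin (n-1) → ZMod 2 := fun j => if (j : ℕ) = c then 1 else 0

/-- the vector part of `(ρ₁ρ₂)^k`. -/
def sfun (n k : ℕ) : Fin (n-1) → ZMod 2 := fun j => if (j : ℕ) + 1 = k % n then 1 else 0

lemma mulVec_indV (n : ℕ) (A : Matrix (Fin (n-1)) (Fin (n-1)) (ZMod 2)) (c : ℕ)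
    (hc : c < n - 1) : A.mulVec (indV n c) = fun i => A i ⟨c, hc⟩ := by
  funext i
  simp only [Matrix.mulVec, dotProduct, indV]
  rw [Finset.sum_eq_single (⟨c, hc⟩ : Fin (n-1))]
  · simp
  · intro j _ hj
    rw [if_neg, mul_zero]
    exact fun h => hj (Fin.ext h)
  · simp

lemma mulVec_zero' (n : ℕ) (A : Matrix (Fin (n-1)) (Fin (n-1)) (ZMod 2)) :
    A.mulVec (fun _ => 0) = fun _ => 0 := by
  funext i; simp [Matrix.mulVec, dotProduct]

lemma uVec_eq_indV (n : ℕ) (hn : 3 ≤ n) : uVec n = indV n (n-2) := rfl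

lemma Umat_mulVec_uVec (n : ℕ) (hn : 3 ≤ n) : (Umat n).mulVec (uVec n) = uVec n := by
  rw [uVec_eq_indV n hn, mulVec_indV n _ _ (by omega)]
  funext i
  have hi := i.2
  simp only [Umat, Matrix.of_apply, uVec, indV]
  split_ifs <;> first | rfl | omega

lemma Vmat_mulVec_uVec (n : ℕ) (hn : 3 ≤ n) : (Vmat n).mulVec (uVec n) = vVec n := by
  rw [uVec_eq_indV n hn, mulVec_indV n _ _ (by omega)]
  funext i
  have hi := i.2
  simp only [Vmat, Matrix.of_apply, vVec, indV]
  split_ifs <;> first | rfl | omega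

lemma step_lemma (n : ℕ) (hn : 3 ≤ n) (k : ℕ) :
    vVec n + (Vmat n).mulVec ((Umat n).mulVec (sfun n k)) = sfun n (k + 1) := by
  set m := k % n with hm
  have hmlt : m < n := Nat.mod_lt _ (by omega)
  have hk1 : (k + 1) % n = (m + 1) % n := by
    conv_lhs => rw [Nat.add_mod, ← hm]
    rw [Nat.one_mod_eq_one.mpr (by omega)]
  rcases Nat.eq_zero_or_pos m with hm0 | hm1
  · -- sfun n k = 0
    have hs : sfun n k = fun _ => 0 := by
      funext j; simp [sfun, ← hm, hm0]
    rw [hs, mulVec_zero' , mulVec_zero']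
    funext i
    have hi := i.2
    have : (k+1) % n = 1 := by rw [hk1, hm0]; exact Nat.mod_eq_of_lt (by omega)
    simp only [Pi.add_apply, vVec, sfun, this, add_zero]
    split_ifs <;> first | rfl | omega
  · have hs : sfun n k = indV n (m - 1) := by
      funext j; simp only [sfun, ← hm, indV]; split_ifs <;> first | rfl | omega
    rw [hs, mulVec_indV n _ _ (by omega)]
    rcases Nat.lt_or_ge m (n-1) with hmle | hmge
    · -- 1 ≤ m ≤ n-2 : U column = e_{n-2} + e_{n-2-m}
      have hcol : (fun j : Fin (n-1) => Umat n j ⟨m-1, by omega⟩) =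
          indV n (n-2) + indV n (n-2-m) := by
        funext j
        have hj := j.2
        simp only [Umat, Matrix.of_apply, indV, Pi.add_apply]
        split_ifs <;> first | decide | omega | simp_all
      rw [hcol, Matrix.mulVec_add, mulVec_indV n _ _ (by omega), mulVec_indV n _ _ (by omega)]
      funext i
      have hi := i.2
      have hkk : (k+1) % n = m + 1 := by rw [hk1]; exact Nat.mod_eq_of_lt (by omega)
      simp only [Pi.add_apply, vVec, Vmat, Matrix.of_apply, sfun, hkk, Fin.val_mk]
      split_ifs <;> first | decide | omega | simp_all
    · -- m = n-1 : U column = e_{n-2}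
      have hmn : m = n - 1 := by omega
      have hcol : (fun j : Fin (n-1) => Umat n j ⟨m-1, by omega⟩) = indV n (n-2) := by
        funext j
        have hj := j.2
        simp only [Umat, Matrix.of_apply, indV]
        split_ifs <;> first | decide | omega | simp_all
      rw [hcol, mulVec_indV n _ _ (by omega)]
      funext i
      have hi := i.2
      have hkk : (k+1) % n = 0 := by rw [hk1, hmn]; simp [Nat.sub_add_cancel (by omega : 1 ≤ n)]
      simp only [Pi.add_apply, vVec, Vmat, Matrix.of_apply, sfun, hkk, Fin.val_mk]
      split_ifs <;> first | decide | omega | simp_all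

lemma sfun_zero_of_mod (n k : ℕ) (h : k % n = 0) : sfun n k = 0 := by
  funext j; simp [sfun, h]

lemma mod_eq_zero_of_sfun (n k : ℕ) (hn : 3 ≤ n) (h : sfun n k = 0) : k % n = 0 := by
  by_contra hne
  have hmlt : k % n < n := Nat.mod_lt _ (by omega)
  have := congrFun h ⟨k % n - 1, by omega⟩
  simp only [sfun, Pi.zero_apply] at this
  rw [if_pos (by omega)] at this
  exact one_ne_zero this

lemma mod_eq_zero_of_V_sfun (n k : ℕ) (hn : 3 ≤ n)
    (h : (Vmat n).mulVec (sfun n k) = 0) : k % n = 0 := by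
  by_contra hne
  have hmlt : k % n < n := Nat.mod_lt _ (by omega)
  have hs : sfun n k = indV n (k % n - 1) := by
    funext j; simp only [sfun, indV]; split_ifs <;> first | rfl | omega
  rw [hs, mulVec_indV n _ _ (by omega)] at h
  have := congrFun h ⟨n - 1 - k % n, by omega⟩
  simp only [Vmat, Matrix.of_apply, Pi.zero_apply] at this
  rw [if_pos (by omega)] at this
  exact one_ne_zero this

/-- The intersection of the subgroups generated by {ρ0, ρ1} and {ρ1, ρ2} equals the subgroup generated by ρ1. -/
theorem stmt_14 (n : ℕ) (hn : 3 ≤ n)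
    (φ : DihedralGroup n →* Multiplicative (AddAut (Fin (n-1) → ZMod 2)))
    (hφ0 : ∀ w, Multiplicative.toAdd (φ (sr 0)) w = (Umat n).mulVec w)
    (hφ1 : ∀ w, Multiplicative.toAdd (φ (sr 1)) w = (Vmat n).mulVec w) :
    Subgroup.closure {rho0 n φ, rho1 n φ} ⊓ Subgroup.closure {rho1 n φ, rho2 n φ} =
      Subgroup.closure {rho1 n φ} := by
  haveI : NeZero n := ⟨by omega⟩
  have act : ∀ (x : DihedralGroup n) (w : Fin (n-1) → ZMod 2),
      (dihAct n φ x) (Multiplicative.ofAdd w) = Multiplicative.ofAdd (Multiplicative.toAdd (φ x) w) := fun x w => rfl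
  set ρ1 := rho1 n φ with hρ1def
  set ρ2 := rho2 n φ with hρ2def
  set t : Gsd n φ := ρ1 * ρ2 with htdef
  -- basic involution facts
  have addself : ∀ w : Fin (n-1) → ZMod 2, w + w = 0 := by
    intro w; funext i; exact CharTwo.add_self_eq_zero (w i)
  have hρ1sq : ρ1 * ρ1 = 1 := by
    refine SemidirectProduct.ext ?_ ?_
    · show Multiplicative.ofAdd 0 * (dihAct n φ (sr 1)) (Multiplicative.ofAdd 0) = 1
      rw [act, hφ1, Matrix.mulVec_zero]
      simp
    · show sr 1 * sr 1 = 1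
      rw [sr_mul_sr, sub_self, ← one_def]
  have hρ2sq : ρ2 * ρ2 = 1 := by
    refine SemidirectProduct.ext ?_ ?_
    · show Multiplicative.ofAdd (uVec n) * (dihAct n φ (sr 0)) (Multiplicative.ofAdd (uVec n)) = 1
      rw [act, hφ0, Umat_mulVec_uVec n hn, ← ofAdd_add, addself]
      simp
    · show sr 0 * sr 0 = 1
      rw [sr_mul_sr, sub_self, ← one_def]
  -- the explicit form of t^k
  have hφr : ∀ w, Multiplicative.toAdd (φ (r (-1))) w = (Vmat n).mulVec ((Umat n).mulVec w) := by
    intro w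
    have : r (-1 : ZMod n) = sr 1 * sr 0 := by rw [sr_mul_sr]; norm_num
    rw [this, _root_.map_mul, toAdd_mul, AddAut.add_apply, hφ0, hφ1]
  have hT : ∀ k : ℕ, t ^ k = ⟨Multiplicative.ofAdd (sfun n k), r (-(k : ZMod n))⟩ := by
    intro k
    induction k with
    | zero =>
      rw [pow_zero]
      refine (SemidirectProduct.ext ?_ ?_).symm
      · show Multiplicative.ofAdd (sfun n 0) = 1
        have : sfun n 0 = 0 := sfun_zero_of_mod n 0 (by simp)
        simp [this]
      · show r (-((0:ℕ) : ZMod n)) = 1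
        simp [← one_def]
    | succ k ih =>
      rw [pow_succ', ih]
      have ht : t = ⟨Multiplicative.ofAdd (vVec n), r (-1)⟩ := by
        rw [htdef, hρ1def, hρ2def]
        refine SemidirectProduct.ext ?_ ?_
        · show Multiplicative.ofAdd 0 * (dihAct n φ (sr 1)) (Multiplicative.ofAdd (uVec n)) = _
          rw [act, hφ1, Vmat_mulVec_uVec n hn]
          simp
        · show sr 1 * sr 0 = r (-1)
          rw [sr_mul_sr]; norm_num
      rw [ht]
      refine SemidirectProduct.ext ?_ ?_
      · show Multiplicative.ofAdd (vVec n) *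
            (dihAct n φ (r (-1))) (Multiplicative.ofAdd (sfun n k)) = _
        rw [act, hφr, ← ofAdd_add, step_lemma n hn k]
      · show r (-1) * r (-(k : ZMod n)) = r (-((k+1 : ℕ) : ZMod n))
        rw [r_mul_r]
        push_cast
        ring_nf
  have htn : t ^ n = 1 := by
    rw [hT n]
    refine SemidirectProduct.ext ?_ ?_
    · show Multiplicative.ofAdd (sfun n n) = 1
      rw [sfun_zero_of_mod n n (Nat.mod_self n)]; simp
    · show r (-(n : ZMod n)) = 1
      simp [ZMod.natCast_self, ← one_def]
  have hinv : ∀ a : ℕ, (t ^ a)⁻¹ = t ^ (a * (n-1)) := by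
    intro a
    have key : t ^ (a * (n-1)) * t ^ a = 1 := by
      rw [← _root_.pow_add]
      have : a * (n - 1) + a = n * a := by
        have h1 : n - 1 + 1 = n := by omega
        calc a * (n-1) + a = a * ((n-1) + 1) := by ring
        _ = n * a := by rw [h1]; ring
      rw [this, _root_.pow_mul, htn, one_pow]
    exact inv_eq_of_mul_eq_one_left key
  have hswap : ∀ a : ℕ, t ^ a * ρ1 = ρ1 * t ^ (a * (n-1)) := by
    intro a
    have hinv1 : ρ1⁻¹ = ρ1 := inv_eq_of_mul_eq_one_left hρ1sq
    have hconj1 : ρ1 * t * ρ1⁻¹ = t⁻¹ := by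
      rw [hinv1, htdef]
      calc ρ1 * (ρ1 * ρ2) * ρ1 = (ρ1 * ρ1) * (ρ2 * ρ1) := by group
      _ = ρ2 * ρ1 := by rw [hρ1sq, one_mul]
      _ = (ρ1 * ρ2)⁻¹ := by
          rw [eq_inv_iff_mul_eq_one]
          calc ρ2 * ρ1 * (ρ1 * ρ2) = ρ2 * (ρ1 * ρ1) * ρ2 := by group
          _ = 1 := by rw [hρ1sq, mul_one, hρ2sq]
    have hconj : ρ1 * t ^ a * ρ1⁻¹ = (t ^ a)⁻¹ := by
      rw [← conj_pow, hconj1, inv_pow]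
    rw [hinv1] at hconj
    calc t ^ a * ρ1 = (ρ1 * ρ1) * (t ^ a * ρ1) := by rw [hρ1sq, one_mul]
    _ = ρ1 * (ρ1 * t ^ a * ρ1) := by group
    _ = ρ1 * (t ^ a)⁻¹ := by rw [hconj]
    _ = ρ1 * t ^ (a * (n-1)) := by rw [hinv]
  -- the subgroup H of words in ρ1, ρ2
  let H : Subgroup (Gsd n φ) :=
    { carrier := {g | ∃ k : ℕ, g = t ^ k ∨ g = ρ1 * t ^ k}
      one_mem' := ⟨0, Or.inl (pow_zero t).symm⟩
      mul_mem' := by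
        rintro x y ⟨a, (rfl | rfl)⟩ ⟨b, (rfl | rfl)⟩
        · exact ⟨a + b, Or.inl (_root_.pow_add t a b).symm⟩
        · refine ⟨a * (n-1) + b, Or.inr ?_⟩
          calc t ^ a * (ρ1 * t ^ b) = (t ^ a * ρ1) * t ^ b := by group
          _ = ρ1 * t ^ (a * (n-1)) * t ^ b := by rw [hswap]
          _ = ρ1 * t ^ (a * (n-1) + b) := by rw [mul_assoc, ← _root_.pow_add]
        · refine ⟨a + b, Or.inr ?_⟩
          rw [mul_assoc, ← _root_.pow_add]
        · refine ⟨a * (n-1) + b, Or.inl ?_⟩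
          calc ρ1 * t ^ a * (ρ1 * t ^ b) = ρ1 * ((t ^ a * ρ1) * t ^ b) := by group
          _ = ρ1 * (ρ1 * t ^ (a * (n-1)) * t ^ b) := by rw [hswap]
          _ = (ρ1 * ρ1) * (t ^ (a * (n-1)) * t ^ b) := by group
          _ = t ^ (a * (n-1) + b) := by rw [hρ1sq, one_mul, ← _root_.pow_add]
      inv_mem' := by
        rintro x ⟨a, (rfl | rfl)⟩
        · exact ⟨a * (n-1), Or.inl (hinv a)⟩
        · refine ⟨a * (n-1) * (n-1), Or.inr ?_⟩
          have hinv1 : ρ1⁻¹ = ρ1 := inv_eq_of_mul_eq_one_left hρ1sq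
          rw [_root_.mul_inv_rev, hinv1, hinv a, hswap] }
  have hH2 : Subgroup.closure {ρ1, ρ2} ≤ H := by
    rw [Subgroup.closure_le]
    rintro x hx
    rcases hx with rfl | rfl
    · exact ⟨0, Or.inr (by rw [pow_zero, mul_one])⟩
    · refine ⟨1, Or.inr ?_⟩
      rw [pow_one, htdef, ← mul_assoc, hρ1sq, one_mul]
  -- the subgroup of elements with trivial vector part
  let K : Subgroup (Gsd n φ) :=
    { carrier := {g | g.left = 1}
      one_mem' := rfl
      mul_mem' := by
        intro x y hx hy
        show (x * y).left = 1
        rw [SemidirectProduct.mul_left, hx, hy, _root_.map_one, mul_one]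
      inv_mem' := by
        intro x hx
        show x⁻¹.left = 1
        rw [SemidirectProduct.inv_left, hx, inv_one, _root_.map_one] }
  have hK1 : Subgroup.closure {rho0 n φ, ρ1} ≤ K := by
    rw [Subgroup.closure_le]
    rintro x hx
    rcases hx with rfl | rfl
    · show (rho0 n φ).left = 1
      simp [rho0]
    · show ρ1.left = 1
      simp [hρ1def, rho1]
  -- main proof
  apply le_antisymm
  · rintro g hg
    rw [Subgroup.mem_inf] at hg
    obtain ⟨hga, hgb⟩ := hg
    have hleft : g.left = 1 := hK1 hga
    obtain ⟨k, hk | hk⟩ := hH2 hgb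
    · -- g = t^k
      rw [hk, hT k] at hleft
      have hs : sfun n k = 0 := by
        have := hleft
        simpa [← ofAdd_zero, Multiplicative.ofAdd.injective.eq_iff] using this
      have hmod : k % n = 0 := mod_eq_zero_of_sfun n k hn hs
      have htk : t ^ k = 1 := by
        rw [hT k]
        refine SemidirectProduct.ext ?_ ?_
        · show Multiplicative.ofAdd (sfun n k) = 1
          rw [hs]; simp
        · show r (-(k : ZMod n)) = 1
          have : (k : ZMod n) = 0 :=
            (ZMod.natCast_eq_zero_iff k n).mpr (Nat.dvd_of_mod_eq_zero hmod)
          simp [this, ← one_def]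
      rw [hk, htk]
      exact one_mem _
    · -- g = ρ1 * t^k
      rw [hk] at hleft
      have hleft2 : (ρ1 * t ^ k).left = 1 := hleft
      rw [SemidirectProduct.mul_left, hT k] at hleft2
      have hVs : (Vmat n).mulVec (sfun n k) = 0 := by
        have h1 : ρ1.right = sr 1 := rfl
        have h2 : ρ1.left = Multiplicative.ofAdd 0 := rfl
        rw [h1, h2, act, hφ1] at hleft2
        have := hleft2
        rw [← ofAdd_zero, ← ofAdd_add, zero_add] at this
        exact Multiplicative.ofAdd.injective (by rw [this, ofAdd_zero])
      have hmod : k % n = 0 := mod_eq_zero_of_V_sfun n k hn hVs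
      have htk : t ^ k = 1 := by
        rw [hT k]
        refine SemidirectProduct.ext ?_ ?_
        · show Multiplicative.ofAdd (sfun n k) = 1
          rw [sfun_zero_of_mod n k hmod]; simp
        · show r (-(k : ZMod n)) = 1
          have : (k : ZMod n) = 0 :=
            (ZMod.natCast_eq_zero_iff k n).mpr (Nat.dvd_of_mod_eq_zero hmod)
          simp [this, ← one_def]
      rw [hk, htk, mul_one]
      exact Subgroup.subset_closure rfl
  · apply le_inf
    · exact Subgroup.closure_mono (by intro x hx; rw [hx]; right; rfl)
    · exact Subgroup.closure_mono (by intro x hx; rw [hx]; left; rfl)
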